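/- The words v occurring with nonzero coefficient in H w (for a word w with n_x x's and n_y y's) are exactly those words v in M_{n_x,n_y} such that: (i) for every i with the i-th x of v immediately followed by a y, the number of y's left of the i-th x in v equals one less than the number of y's left of the i-th x in w; and (ii) for every other i, the number of y's left of the i-th x in v is at least that in w. The coefficient of such a v in H w is (−1)^{|E^x_v|}, where E^x_v is the set of indices of x's in v immediately followed by y. -/

import Mathlib

open scoped Classical

/-- Words over the two-letter alphabet {x,y}; `false` is `x`, `true` is `y`. -/
abbrev Word := List Bool

/-- 0-indexed positions of the x's (`false`) in a word. -/
def xIdx (w : Word) : List ℕ :=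
  (List.range w.length).filter (fun j => w.getD j true = false)

/-- 0-indexed positions of the y's (`true`) in a word. -/
def yIdx (w : Word) : List ℕ :=
  (List.range w.length).filter (fun j => w.getD j false = true)

/-- `fX w i` = number of y's strictly left of the i-th x of `w` (i is 0-indexed). -/
def fX (w : Word) (i : ℕ) : ℕ := (xIdx w).getD i 0 - i

/-- `fY w j` = number of x's strictly left of the j-th y of `w` (j is 0-indexed). -/
def fY (w : Word) (j : ℕ) : ℕ := (yIdx w).getD j 0 - j

/-- `hX w i` = (1-indexed) position of the i-th x of `w` (i is 0-indexed). -/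
def hX (w : Word) (i : ℕ) : ℕ := (xIdx w).getD i 0 + 1

/-- The pawn-move partial order: same letter counts, and each x of `w0` lies at a
position at most that of the corresponding x of `w1`. -/
def wle (w0 w1 : Word) : Prop :=
  w0.count false = w1.count false ∧ w0.count true = w1.count true ∧
  ∀ i < w0.count false, (xIdx w0).getD i 0 ≤ (xIdx w1).getD i 0

/-- Creation operator `a*_{s,i}` on words: `i = 0` prepends `s`; `1 ≤ i ≤ n_s`
replaces the i-th `s` by `ss`; `i = n_s + 1` appends `s`. -/
def create (s : Bool) : ℕ → Word → Word
  | 0, w => s :: w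
  | _+1, [] => [s]
  | i+1, a :: w =>
    if a = s then (if i = 0 then s :: s :: w else a :: create s i w)
    else a :: create s (i+1) w

/-- Delete the i-th occurrence (1-indexed) of `s`. -/
def delNth (s : Bool) : ℕ → Word → Word
  | _, [] => []
  | i, a :: w => if a = s then (if i ≤ 1 then w else a :: delNth s (i-1) w)
                 else a :: delNth s i w

/-- Annihilation operator `a_{s,i}` on words: `i = 0` deletes an initial `s` (else 0);
`1 ≤ i ≤ n_s` deletes the i-th `s`; `i = n_s + 1` deletes a final `s` (else 0). -/
def annih (s : Bool) (i : ℕ) (w : Word) : Option Word :=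
  if i = 0 then
    match w with
    | a :: t => if a = s then some t else none
    | [] => none
  else if i ≤ w.count s then some (delNth s i w)
  else if i = w.count s + 1 then
    if w.getLast? = some s then some w.dropLast else none
  else none

/-- The free ℤ-module on words: the Fock space `F`. -/
abbrev FS := Word →₀ ℤ

/-- Basis vector of a word. -/
noncomputable def δ (w : Word) : FS := Finsupp.single w 1

/-- `0` for `none`, basis vector for `some`. -/
noncomputable def optδ (o : Option Word) : FS := o.elim 0 δ

/-- Extend a word-indexed family of vectors to a linear map on `FS`. -/
noncomputable def opOf (g : Word → FS) : FS →ₗ[ℤ] FS := Finsupp.lift FS ℤ Word g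

/-- Creation operator as a linear map. -/
noncomputable def Cr (s : Bool) (i : ℕ) : FS →ₗ[ℤ] FS := opOf (fun w => δ (create s i w))

/-- Annihilation operator as a linear map. -/
noncomputable def An (s : Bool) (i : ℕ) : FS →ₗ[ℤ] FS := opOf (fun w => optδ (annih s i w))

/-- Boolean bilinear form on words: `1` if `w0 ≤ w1` in the pawn-move order, else `0`. -/
noncomputable def pairW (w0 w1 : Word) : ℤ := if wle w0 w1 then 1 else 0

/-- Bilinear extension of `pairW` to the free module. -/
noncomputable def pairF (u v : FS) : ℤ :=
  u.sum fun w0 a => v.sum fun w1 b => a * b * pairW w0 w1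

/-- Kronecker delta form on words. -/
noncomputable def dotW (w0 w1 : Word) : ℤ := if w0 = w1 then 1 else 0

/-- Bilinear extension of `dotW`: words form an orthonormal basis. -/
noncomputable def dotF (u v : FS) : ℤ :=
  u.sum fun w0 a => v.sum fun w1 b => a * b * dotW w0 w1

/-- All words of a given length. -/
noncomputable def wordsOfLen (n : ℕ) : Finset Word :=
  (Finset.univ : Finset (Fin n → Bool)).image List.ofFn

/-- Swap `xy → yx` at the x's whose (0-indexed) number lies in `T`;
the counter `k` records how many x's have been passed. -/
def psiX (T : Finset ℕ) : Word → ℕ → Word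
  | [], _ => []
  | false :: true :: w, k =>
      if k ∈ T then true :: false :: psiX T w (k+1)
      else false :: psiX T (true :: w) (k+1)
  | false :: w, k => false :: psiX T w (k+1)
  | true :: w, k => true :: psiX T w k
  termination_by w _ => w.length
  decreasing_by all_goals (simp <;> omega)

/-- Swap `yx → xy` at the y's whose (0-indexed) number lies in `T`. -/
def psiY (T : Finset ℕ) : Word → ℕ → Word
  | [], _ => []
  | true :: false :: w, k =>
      if k ∈ T then false :: true :: psiY T w (k+1)
      else true :: psiY T (false :: w) (k+1)
  | true :: w, k => true :: psiY T w (k+1)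
  | false :: w, k => false :: psiY T w k
  termination_by w _ => w.length
  decreasing_by all_goals (simp <;> omega)

/-- `Ex w`: 0-indexed numbers of the x's of `w` immediately followed by a y. -/
noncomputable def Ex (w : Word) : Finset ℕ :=
  (Finset.range (w.count false)).filter
    (fun i => w.getD ((xIdx w).getD i 0 + 1) false = true)

/-- `Ey w`: 0-indexed numbers of the y's of `w` immediately followed by an x. -/
noncomputable def Ey (w : Word) : Finset ℕ :=
  (Finset.range (w.count true)).filter
    (fun i => w.getD ((yIdx w).getD i 0 + 1) true = false)

/-- The duality operator on a word, explicitly: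
`H w = Σ_{w' ≥ w} Σ_{T ⊆ E^y_{w'}} (−1)^{|T|} ψ^y_T w'`. -/
noncomputable def HW (w : Word) : FS :=
  ∑ w' ∈ (wordsOfLen w.length).filter (fun u => wle w u),
    ∑ T ∈ (Ey w').powerset, ((-1 : ℤ)^T.card) • δ (psiY T w' 0)

lemma yIdx_cons (b : Bool) (u : Word) :
    yIdx (b :: u) = (if b then [0] else []) ++ (yIdx u).map (· + 1) := by
  unfold yIdx
  rw [show (b :: u : Word).length = u.length + 1 from rfl, List.range_succ_eq_map,
    List.filter_cons, List.filter_map]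
  cases b <;> simp [Function.comp_def, Nat.succ_eq_add_one]

lemma xIdx_cons (b : Bool) (u : Word) :
    xIdx (b :: u) = (if b then [] else [0]) ++ (xIdx u).map (· + 1) := by
  unfold xIdx
  rw [show (b :: u : Word).length = u.length + 1 from rfl, List.range_succ_eq_map,
    List.filter_cons, List.filter_map]
  cases b <;> simp [Function.comp_def, Nat.succ_eq_add_one]

lemma length_yIdx (u : Word) : (yIdx u).length = u.count true := by
  induction u with
  | nil => rfl
  | cons b u ih => rw [yIdx_cons]; cases b <;> simp [ih, List.count_cons]

lemma length_xIdx (u : Word) : (xIdx u).length = u.count false := by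
  induction u with
  | nil => rfl
  | cons b u ih => rw [xIdx_cons]; cases b <;> simp [ih, List.count_cons]

lemma getD_map_add_one (l : List ℕ) (i : ℕ) (h : i < l.length) :
    (l.map (· + 1)).getD i 0 = l.getD i 0 + 1 := by
  rw [List.getD_eq_getElem?_getD, List.getD_eq_getElem?_getD, List.getElem?_map,
    List.getElem?_eq_getElem h]
  simp
lemma mem_Ey (u : Word) (j : ℕ) :
    j ∈ Ey u ↔ j < u.count true ∧ u.getD ((yIdx u).getD j 0 + 1) true = false := by
  simp [Ey, Finset.mem_filter, Finset.mem_range, and_comm]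

lemma mem_Ex (u : Word) (j : ℕ) :
    j ∈ Ex u ↔ j < u.count false ∧ u.getD ((xIdx u).getD j 0 + 1) false = true := by
  simp [Ex, Finset.mem_filter, Finset.mem_range, and_comm]

lemma mem_Ey_false_cons (u : Word) (j : ℕ) : j ∈ Ey (false :: u) ↔ j ∈ Ey u := by
  rw [mem_Ey, mem_Ey]
  have hc : (false :: u : Word).count true = u.count true := by simp [List.count_cons]
  have hy : yIdx (false :: u) = (yIdx u).map (· + 1) := by rw [yIdx_cons]; simp
  constructor <;> rintro ⟨h1, h2⟩ <;> rw [hc] at * <;> refine ⟨h1, ?_⟩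
  · have e : (yIdx (false::u)).getD j 0 = (yIdx u).getD j 0 + 1 := by
      rw [hy]; exact getD_map_add_one _ _ (by rw [length_yIdx]; exact h1)
    rw [e] at h2; exact h2
  · have e : (yIdx (false::u)).getD j 0 = (yIdx u).getD j 0 + 1 := by
      rw [hy]; exact getD_map_add_one _ _ (by rw [length_yIdx]; exact h1)
    rw [e]; exact h2

lemma mem_Ey_true_cons_succ (u : Word) (j : ℕ) : j + 1 ∈ Ey (true :: u) ↔ j ∈ Ey u := by
  rw [mem_Ey, mem_Ey]
  have hc : (true :: u : Word).count true = u.count true + 1 := by simp [List.count_cons]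
  have hy : yIdx (true :: u) = 0 :: (yIdx u).map (· + 1) := by rw [yIdx_cons]; simp
  rw [hc]
  constructor <;> rintro ⟨h1, h2⟩ <;> refine ⟨by omega, ?_⟩
  · have e : (yIdx (true::u)).getD (j+1) 0 = (yIdx u).getD j 0 + 1 := by
      rw [hy, List.getD_cons_succ]
      exact getD_map_add_one _ _ (by rw [length_yIdx]; omega)
    rw [e, List.getD_cons_succ] at h2; exact h2
  · have e : (yIdx (true::u)).getD (j+1) 0 = (yIdx u).getD j 0 + 1 := by
      rw [hy, List.getD_cons_succ]
      exact getD_map_add_one _ _ (by rw [length_yIdx]; omega)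
    rw [e, List.getD_cons_succ]; exact h2

lemma mem_Ey_true_cons_zero (u : Word) : 0 ∈ Ey (true :: u) ↔ u.getD 0 true = false := by
  rw [mem_Ey]
  have hy : yIdx (true :: u) = 0 :: (yIdx u).map (· + 1) := by rw [yIdx_cons]; simp
  simp [hy, List.count_cons]

lemma mem_Ex_true_cons (u : Word) (j : ℕ) : j ∈ Ex (true :: u) ↔ j ∈ Ex u := by
  rw [mem_Ex, mem_Ex]
  have hc : (true :: u : Word).count false = u.count false := by simp [List.count_cons]
  have hx : xIdx (true :: u) = (xIdx u).map (· + 1) := by rw [xIdx_cons]; simp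
  constructor <;> rintro ⟨h1, h2⟩ <;> rw [hc] at * <;> refine ⟨h1, ?_⟩
  · have e : (xIdx (true::u)).getD j 0 = (xIdx u).getD j 0 + 1 := by
      rw [hx]; exact getD_map_add_one _ _ (by rw [length_xIdx]; exact h1)
    rw [e] at h2; exact h2
  · have e : (xIdx (true::u)).getD j 0 = (xIdx u).getD j 0 + 1 := by
      rw [hx]; exact getD_map_add_one _ _ (by rw [length_xIdx]; exact h1)
    rw [e]; exact h2

lemma mem_Ex_false_cons_succ (u : Word) (j : ℕ) : j + 1 ∈ Ex (false :: u) ↔ j ∈ Ex u := by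
  rw [mem_Ex, mem_Ex]
  have hc : (false :: u : Word).count false = u.count false + 1 := by simp [List.count_cons]
  have hx : xIdx (false :: u) = 0 :: (xIdx u).map (· + 1) := by rw [xIdx_cons]; simp
  rw [hc]
  constructor <;> rintro ⟨h1, h2⟩ <;> refine ⟨by omega, ?_⟩
  · have e : (xIdx (false::u)).getD (j+1) 0 = (xIdx u).getD j 0 + 1 := by
      rw [hx, List.getD_cons_succ]
      exact getD_map_add_one _ _ (by rw [length_xIdx]; omega)
    rw [e, List.getD_cons_succ] at h2; exact h2
  · have e : (xIdx (false::u)).getD (j+1) 0 = (xIdx u).getD j 0 + 1 := by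
      rw [hx, List.getD_cons_succ]
      exact getD_map_add_one _ _ (by rw [length_xIdx]; omega)
    rw [e, List.getD_cons_succ]; exact h2

lemma mem_Ex_false_cons_zero (u : Word) : 0 ∈ Ex (false :: u) ↔ u.getD 0 false = true := by
  rw [mem_Ex]
  have hx : xIdx (false :: u) = 0 :: (xIdx u).map (· + 1) := by rw [xIdx_cons]; simp
  simp [hx, List.count_cons]

lemma mem_Ey_lt (u : Word) (j : ℕ) (h : j ∈ Ey u) : j < u.count true := ((mem_Ey u j).1 h).1
lemma mem_Ex_lt (u : Word) (j : ℕ) (h : j ∈ Ex u) : j < u.count false := ((mem_Ex u j).1 h).1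
lemma psiY_count (T : Finset ℕ) (b : Bool) : ∀ n (w : Word), w.length ≤ n → ∀ k,
    (psiY T w k).count b = w.count b := by
  intro n
  induction n with
  | zero => intro w hw k; rw [List.length_eq_zero_iff.1 (Nat.le_zero.1 hw)]; simp [psiY]
  | succ n ih =>
    intro w hw k
    match w with
    | [] => simp [psiY]
    | false :: u =>
      simp only [List.length_cons] at hw
      simp [psiY, List.count_cons, ih u (by omega) k]
    | [true] => simp [psiY]
    | true :: true :: u =>
      simp only [List.length_cons] at hw
      simp [psiY, List.count_cons, ih (true :: u) (by simp; omega) (k+1)]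
    | true :: false :: u =>
      simp only [List.length_cons] at hw
      by_cases h : k ∈ T
      · simp [psiY, h, List.count_cons, ih u (by omega) (k+1)]; omega
      · simp [psiY, h, List.count_cons, ih (false :: u) (by simp; omega) (k+1),
          ih u (by omega) (k+1)]

lemma psiY_count' (T : Finset ℕ) (b : Bool) (w : Word) (k : ℕ) :
    (psiY T w k).count b = w.count b := psiY_count T b w.length w le_rfl k

lemma count_false_add_count_true (w : Word) : w.count false + w.count true = w.length := by
  induction w with
  | nil => rfl
  | cons b u ih => cases b <;> simp [List.count_cons] <;> omega

lemma psiY_length (T : Finset ℕ) (w : Word) (k : ℕ) : (psiY T w k).length = w.length := by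
  rw [← count_false_add_count_true, ← count_false_add_count_true w,
    psiY_count' , psiY_count']

lemma psiY_congr : ∀ n (w : Word), w.length ≤ n → ∀ (T₁ T₂ : Finset ℕ) k,
    (∀ j, k ≤ j → (j ∈ T₁ ↔ j ∈ T₂)) → psiY T₁ w k = psiY T₂ w k := by
  intro n
  induction n with
  | zero => intro w hw T₁ T₂ k _; rw [List.length_eq_zero_iff.1 (Nat.le_zero.1 hw)]; simp [psiY]
  | succ n ih =>
    intro w hw T₁ T₂ k hT
    match w with
    | [] => simp [psiY]
    | false :: u =>
      simp only [List.length_cons] at hw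
      simp [psiY, ih u (by omega) T₁ T₂ k hT]
    | [true] => simp [psiY]
    | true :: true :: u =>
      simp only [List.length_cons] at hw
      simp [psiY, ih (true :: u) (by simp; omega) T₁ T₂ (k+1)
        (fun j hj => hT j (by omega))]
    | true :: false :: u =>
      simp only [List.length_cons] at hw
      by_cases h : k ∈ T₁
      · rw [show psiY T₁ (true::false::u) k = false :: true :: psiY T₁ u (k+1) by
          simp [psiY, h],
          show psiY T₂ (true::false::u) k = false :: true :: psiY T₂ u (k+1) by
          simp [psiY, (hT k le_rfl).1 h],
          ih u (by omega) T₁ T₂ (k+1) (fun j hj => hT j (by omega))]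
      · have h₂ : k ∉ T₂ := fun hh => h ((hT k le_rfl).2 hh)
        rw [show psiY T₁ (true::false::u) k = true :: psiY T₁ (false::u) (k+1) by
          simp [psiY, h],
          show psiY T₂ (true::false::u) k = true :: psiY T₂ (false::u) (k+1) by
          simp [psiY, h₂],
          ih (false::u) (by simp; omega) T₁ T₂ (k+1) (fun j hj => hT j (by omega))]

lemma getD_map_not (w : Word) (j : ℕ) (b : Bool) :
    (w.map not).getD j b = !(w.getD j !b) := by
  rw [List.getD_eq_getElem?_getD, List.getD_eq_getElem?_getD, List.getElem?_map]
  cases h : w[j]? <;> simp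

lemma yIdx_map_not (w : Word) : yIdx (w.map not) = xIdx w := by
  unfold yIdx xIdx
  rw [List.length_map]
  apply List.filter_congr
  intro j hj
  rw [List.mem_range] at hj
  rw [getD_map_not]
  have h : w[j]? = some w[j] := List.getElem?_eq_some_iff.2 ⟨hj, rfl⟩
  have h1 : w.getD j true = w[j] := by rw [List.getD_eq_getElem?_getD, h]; rfl
  have h2 : w.getD j false = w[j] := by rw [List.getD_eq_getElem?_getD, h]; rfl
  simp only [Bool.not_false]
  rw [h1]
  cases w[j] <;> simp

lemma count_map_not (w : Word) (b : Bool) : (w.map not).count b = w.count !b := by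
  induction w with
  | nil => rfl
  | cons a u ih => cases a <;> cases b <;> simp [List.count_cons, ih]

lemma dual_Ex (w : Word) : Ex w = Ey (w.map not) := by
  unfold Ex Ey
  rw [yIdx_map_not, count_map_not]
  apply Finset.filter_congr
  intro i _
  rw [getD_map_not]
  simp
lemma dual_psi : ∀ n (w : Word), w.length ≤ n → ∀ (T : Finset ℕ) k,
    psiX T w k = (psiY T (w.map not) k).map not := by
  intro n
  induction n with
  | zero =>
    intro w hw T k
    rw [List.length_eq_zero_iff.1 (Nat.le_zero.1 hw)]; simp [psiX, psiY]
  | succ n ih =>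
    intro w hw T k
    match w with
    | [] => simp [psiX, psiY]
    | true :: u =>
      simp only [List.length_cons] at hw
      simp [psiX, psiY, ih u (by omega) T k]
    | [false] => simp [psiX, psiY]
    | false :: false :: u =>
      simp only [List.length_cons] at hw
      have := ih (false :: u) (by simp; omega) T (k+1)
      simp [psiX, psiY] at this ⊢
      exact this
    | false :: true :: u =>
      simp only [List.length_cons] at hw
      by_cases h : k ∈ T
      · simp [psiX, psiY, h, ih u (by omega) T (k+1)]
      · have := ih (true :: u) (by simp; omega) T (k+1)
        simp [psiX, psiY, h] at this ⊢
        exact this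

lemma dual_psi' (w : Word) (T : Finset ℕ) (k : ℕ) :
    psiX T w k = (psiY T (w.map not) k).map not := dual_psi w.length w le_rfl T k

lemma map_not_not (w : Word) : (w.map not).map not = w := by
  rw [List.map_map]; simp [Function.comp_def]

lemma dual_psi'' (w : Word) (T : Finset ℕ) (k : ℕ) :
    psiY T w k = (psiX T (w.map not) k).map not := by
  rw [dual_psi', map_not_not, map_not_not]

lemma dual_Ey (w : Word) : Ey w = Ex (w.map not) := by
  rw [dual_Ex, map_not_not]

lemma psiX_count' (T : Finset ℕ) (b : Bool) (w : Word) (k : ℕ) :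
    (psiX T w k).count b = w.count b := by
  rw [dual_psi', count_map_not, psiY_count', count_map_not]; simp

lemma psiX_length (T : Finset ℕ) (w : Word) (k : ℕ) : (psiX T w k).length = w.length := by
  rw [dual_psi', List.length_map, psiY_length, List.length_map]

lemma psiX_congr (w : Word) (T₁ T₂ : Finset ℕ) (k : ℕ)
    (hT : ∀ j, k ≤ j → (j ∈ T₁ ↔ j ∈ T₂)) : psiX T₁ w k = psiX T₂ w k := by
  rw [dual_psi', dual_psi', psiY_congr _ _ le_rfl T₁ T₂ k hT]

lemma psiX_false_head (S : Finset ℕ) (u : Word) (k : ℕ) (h : k ∉ S) :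
    psiX S (false :: u) k = false :: psiX S u (k+1) := by
  match u with
  | [] => simp [psiX]
  | false :: u => simp [psiX]
  | true :: u => simp [psiX, h]
lemma Ey_nil : Ey [] = ∅ := by simp [Ey]

lemma B1 : ∀ n (w : Word), w.length ≤ n → ∀ (T : Finset ℕ) ky kx,
    (∀ j ∈ T, ky ≤ j ∧ (j - ky) ∈ Ey w) →
    ∃ S : Finset ℕ, (∀ i ∈ S, kx ≤ i ∧ (i - kx) ∈ Ex (psiY T w ky)) ∧
      psiX S (psiY T w ky) kx = w ∧ S.card = T.card := by
  intro n
  induction n with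
  | zero =>
    intro w hw T ky kx hT
    rw [List.length_eq_zero_iff.1 (Nat.le_zero.1 hw)] at *
    have hT0 : T = ∅ := Finset.eq_empty_of_forall_notMem fun j hj => by
      have := (hT j hj).2; rw [Ey_nil] at this; exact absurd this (Finset.notMem_empty _)
    exact ⟨∅, by simp, by simp [psiX, psiY], by simp [hT0]⟩
  | succ n ih =>
    intro w hw T ky kx hT
    match w with
    | [] =>
      have hT0 : T = ∅ := Finset.eq_empty_of_forall_notMem fun j hj => by
        have := (hT j hj).2; rw [Ey_nil] at this; exact absurd this (Finset.notMem_empty _)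
      exact ⟨∅, by simp, by simp [psiX, psiY], by simp [hT0]⟩
    | false :: u =>
      simp only [List.length_cons] at hw
      obtain ⟨S₂, hmem, heq, hcard⟩ := ih u (by omega) T ky (kx+1) (fun j hj => by
        obtain ⟨h1, h2⟩ := hT j hj
        exact ⟨h1, (mem_Ey_false_cons u _).1 h2⟩)
      rw [show psiY T (false :: u) ky = false :: psiY T u ky by simp [psiY]]
      refine ⟨S₂, fun i hi => ?_, ?_, hcard⟩
      · obtain ⟨h1, h2⟩ := hmem i hi
        refine ⟨by omega, ?_⟩
        have : i - kx = (i - (kx+1)) + 1 := by omega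
        rw [this, mem_Ex_false_cons_succ]
        exact h2
      · rw [psiX_false_head _ _ _ (fun hk => by have := (hmem kx hk).1; omega), heq]
    | [true] =>
      have hT0 : T = ∅ := Finset.eq_empty_of_forall_notMem fun j hj => by
        obtain ⟨h1, h2⟩ := hT j hj
        rcases Nat.eq_zero_or_eq_succ_pred (j - ky) with h | h
        · rw [h] at h2
          rw [mem_Ey_true_cons_zero] at h2
          simp at h2
        · rw [h, mem_Ey_true_cons_succ, mem_Ey] at h2
          simp at h2
      refine ⟨∅, by simp, ?_, by simp [hT0]⟩
      rw [show psiY T [true] ky = [true] by simp [psiY]]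
      simp [psiX]
    | true :: true :: u =>
      simp only [List.length_cons] at hw
      have hky : ∀ j ∈ T, ky + 1 ≤ j ∧ (j - (ky+1)) ∈ Ey (true :: u) := by
        intro j hj
        obtain ⟨h1, h2⟩ := hT j hj
        have hne : j ≠ ky := by
          intro he; rw [he] at h2; simp at h2
          rw [mem_Ey_true_cons_zero] at h2
          simp at h2
        have : j - ky = (j - (ky+1)) + 1 := by omega
        rw [this, mem_Ey_true_cons_succ] at h2
        exact ⟨by omega, h2⟩
      obtain ⟨S₁, hmem, heq, hcard⟩ := ih (true :: u) (by simp; omega) T (ky+1) kx hky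
      rw [show psiY T (true :: true :: u) ky = true :: psiY T (true :: u) (ky+1) by
        simp [psiY]]
      refine ⟨S₁, fun i hi => ?_, ?_, hcard⟩
      · obtain ⟨h1, h2⟩ := hmem i hi
        exact ⟨h1, (mem_Ex_true_cons _ _).2 h2⟩
      · rw [show ∀ z, psiX S₁ (true :: z) kx = true :: psiX S₁ z kx from fun z => by
          simp [psiX], heq]
    | true :: false :: u =>
      simp only [List.length_cons] at hw
      by_cases hk : ky ∈ T
      · -- swap happens
        have hcong : psiY T u (ky+1) = psiY (T.erase ky) u (ky+1) :=
          psiY_congr _ u le_rfl _ _ _ (fun j hj => by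
            simp [Finset.mem_erase]; intro _; omega)
        obtain ⟨S₂, hmem, heq, hcard⟩ := ih u (by omega) (T.erase ky) (ky+1) (kx+1)
          (fun j hj => by
            rw [Finset.mem_erase] at hj
            obtain ⟨h1, h2⟩ := hT j hj.2
            have : j - ky = (j - (ky+1)) + 1 := by omega
            rw [this, mem_Ey_true_cons_succ, mem_Ey_false_cons] at h2
            exact ⟨by omega, h2⟩)
        rw [show psiY T (true :: false :: u) ky = false :: true :: psiY T u (ky+1) by
          simp [psiY, hk], hcong]
        have hkxS : kx ∉ S₂ := fun hh => by have := (hmem kx hh).1; omega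
        refine ⟨insert kx S₂, fun i hi => ?_, ?_, ?_⟩
        · rcases Finset.mem_insert.1 hi with h | h
          · subst h
            refine ⟨le_rfl, ?_⟩
            rw [Nat.sub_self, mem_Ex_false_cons_zero]
            simp
          · obtain ⟨h1, h2⟩ := hmem i h
            refine ⟨by omega, ?_⟩
            have : i - kx = (i - (kx+1)) + 1 := by omega
            rw [this, mem_Ex_false_cons_succ, mem_Ex_true_cons]
            exact h2
        · rw [show psiX (insert kx S₂) (false :: true :: psiY (T.erase ky) u (ky+1)) kx
            = true :: false :: psiX (insert kx S₂) (psiY (T.erase ky) u (ky+1)) (kx+1) by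
            simp [psiX]]
          rw [psiX_congr _ (insert kx S₂) S₂ (kx+1) (fun j hj => by
            simp [Finset.mem_insert]; intro h; omega), heq]
        · rw [Finset.card_insert_of_notMem hkxS, hcard,
            Finset.card_erase_of_mem hk]
          have : T.card ≠ 0 := Finset.card_ne_zero_of_mem hk
          omega
      · -- no swap
        obtain ⟨S₁, hmem, heq, hcard⟩ := ih (false :: u) (by simp; omega) T (ky+1) kx
          (fun j hj => by
            obtain ⟨h1, h2⟩ := hT j hj
            have hne : j ≠ ky := fun he => hk (he ▸ hj)
            have : j - ky = (j - (ky+1)) + 1 := by omega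
            rw [this, mem_Ey_true_cons_succ] at h2
            exact ⟨by omega, h2⟩)
        rw [show psiY T (true :: false :: u) ky = true :: psiY T (false :: u) (ky+1) by
          simp [psiY, hk]]
        refine ⟨S₁, fun i hi => ?_, ?_, hcard⟩
        · obtain ⟨h1, h2⟩ := hmem i hi
          exact ⟨h1, (mem_Ex_true_cons _ _).2 h2⟩
        · rw [show ∀ z, psiX S₁ (true :: z) kx = true :: psiX S₁ z kx from fun z => by
            simp [psiX], heq]
lemma B3 : ∀ n (w : Word), w.length ≤ n → ∀ (T₁ T₂ : Finset ℕ) ky,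
    (∀ j ∈ T₁, ky ≤ j ∧ (j - ky) ∈ Ey w) →
    (∀ j ∈ T₂, ky ≤ j ∧ (j - ky) ∈ Ey w) →
    psiY T₁ w ky = psiY T₂ w ky → T₁ = T₂ := by
  have empty : ∀ (T : Finset ℕ) ky, (∀ j ∈ T, ky ≤ j ∧ (j - ky) ∈ Ey ([] : Word)) → T = ∅ :=
    fun T ky hT => Finset.eq_empty_of_forall_notMem fun j hj => by
      have := (hT j hj).2; rw [Ey_nil] at this; exact absurd this (Finset.notMem_empty _)
  have empty1 : ∀ (T : Finset ℕ) ky, (∀ j ∈ T, ky ≤ j ∧ (j - ky) ∈ Ey ([true] : Word)) →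
      T = ∅ := fun T ky hT => Finset.eq_empty_of_forall_notMem fun j hj => by
    obtain ⟨h1, h2⟩ := hT j hj
    rcases Nat.eq_zero_or_eq_succ_pred (j - ky) with h | h
    · rw [h, mem_Ey_true_cons_zero] at h2; simp at h2
    · rw [h, mem_Ey_true_cons_succ, mem_Ey] at h2; simp at h2
  intro n
  induction n with
  | zero =>
    intro w hw T₁ T₂ ky h1 h2 _
    rw [List.length_eq_zero_iff.1 (Nat.le_zero.1 hw)] at *
    rw [empty T₁ ky h1, empty T₂ ky h2]
  | succ n ih =>
    intro w hw T₁ T₂ ky h1 h2 heq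
    match w with
    | [] => rw [empty T₁ ky h1, empty T₂ ky h2]
    | [true] => rw [empty1 T₁ ky h1, empty1 T₂ ky h2]
    | false :: u =>
      simp only [List.length_cons] at hw
      rw [show psiY T₁ (false :: u) ky = false :: psiY T₁ u ky by simp [psiY],
        show psiY T₂ (false :: u) ky = false :: psiY T₂ u ky by simp [psiY]] at heq
      exact ih u (by omega) T₁ T₂ ky
        (fun j hj => ⟨(h1 j hj).1, (mem_Ey_false_cons u _).1 (h1 j hj).2⟩)
        (fun j hj => ⟨(h2 j hj).1, (mem_Ey_false_cons u _).1 (h2 j hj).2⟩)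
        (List.cons_injective heq)
    | true :: true :: u =>
      simp only [List.length_cons] at hw
      have tr : ∀ (T : Finset ℕ), (∀ j ∈ T, ky ≤ j ∧ (j - ky) ∈ Ey (true :: true :: u)) →
          ∀ j ∈ T, ky + 1 ≤ j ∧ (j - (ky+1)) ∈ Ey (true :: u) := by
        intro T hT j hj
        obtain ⟨ha, hb⟩ := hT j hj
        have hne : j ≠ ky := by
          intro he; rw [he] at hb; simp at hb
          rw [mem_Ey_true_cons_zero] at hb; simp at hb
        have : j - ky = (j - (ky+1)) + 1 := by omega
        rw [this, mem_Ey_true_cons_succ] at hb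
        exact ⟨by omega, hb⟩
      rw [show psiY T₁ (true :: true :: u) ky = true :: psiY T₁ (true :: u) (ky+1) by
          simp [psiY],
        show psiY T₂ (true :: true :: u) ky = true :: psiY T₂ (true :: u) (ky+1) by
          simp [psiY]] at heq
      exact ih (true :: u) (by simp; omega) T₁ T₂ (ky+1) (tr T₁ h1) (tr T₂ h2)
        (List.cons_injective heq)
    | true :: false :: u =>
      simp only [List.length_cons] at hw
      have tr : ∀ (T : Finset ℕ), ky ∉ T →
          (∀ j ∈ T, ky ≤ j ∧ (j - ky) ∈ Ey (true :: false :: u)) →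
          ∀ j ∈ T, ky + 1 ≤ j ∧ (j - (ky+1)) ∈ Ey (false :: u) := by
        intro T hk hT j hj
        obtain ⟨ha, hb⟩ := hT j hj
        have hne : j ≠ ky := fun he => hk (he ▸ hj)
        have : j - ky = (j - (ky+1)) + 1 := by omega
        rw [this, mem_Ey_true_cons_succ] at hb
        exact ⟨by omega, hb⟩
      have tr2 : ∀ (T : Finset ℕ),
          (∀ j ∈ T, ky ≤ j ∧ (j - ky) ∈ Ey (true :: false :: u)) →
          ∀ j ∈ T.erase ky, ky + 1 ≤ j ∧ (j - (ky+1)) ∈ Ey u := by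
        intro T hT j hj
        rw [Finset.mem_erase] at hj
        obtain ⟨ha, hb⟩ := hT j hj.2
        have : j - ky = (j - (ky+1)) + 1 := by omega
        rw [this, mem_Ey_true_cons_succ, mem_Ey_false_cons] at hb
        exact ⟨by omega, hb⟩
      by_cases hk1 : ky ∈ T₁ <;> by_cases hk2 : ky ∈ T₂
      · rw [show psiY T₁ (true :: false :: u) ky = false :: true :: psiY T₁ u (ky+1) by
            simp [psiY, hk1],
          show psiY T₂ (true :: false :: u) ky = false :: true :: psiY T₂ u (ky+1) by
            simp [psiY, hk2]] at heq
        have heq' : psiY (T₁.erase ky) u (ky+1) = psiY (T₂.erase ky) u (ky+1) := by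
          rw [← psiY_congr _ u le_rfl T₁ (T₁.erase ky) (ky+1) (fun j hj => by
              simp [Finset.mem_erase]; intro _; omega),
            ← psiY_congr _ u le_rfl T₂ (T₂.erase ky) (ky+1) (fun j hj => by
              simp [Finset.mem_erase]; intro _; omega)]
          exact List.cons_injective (List.cons_injective heq)
        have hEr := ih u (by omega) (T₁.erase ky) (T₂.erase ky) (ky+1)
          (tr2 T₁ h1) (tr2 T₂ h2) heq'
        ext j
        by_cases hj : j = ky
        · subst hj; simp [hk1, hk2]
        · constructor <;> intro hm
          · have hmm : j ∈ T₁.erase ky := Finset.mem_erase.2 ⟨hj, hm⟩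
            rw [hEr] at hmm
            exact Finset.mem_of_mem_erase hmm
          · have hmm : j ∈ T₂.erase ky := Finset.mem_erase.2 ⟨hj, hm⟩
            rw [← hEr] at hmm
            exact Finset.mem_of_mem_erase hmm
      · rw [show psiY T₁ (true :: false :: u) ky = false :: true :: psiY T₁ u (ky+1) by
            simp [psiY, hk1],
          show psiY T₂ (true :: false :: u) ky = true :: psiY T₂ (false :: u) (ky+1) by
            simp [psiY, hk2]] at heq
        exact absurd (List.head_eq_of_cons_eq heq) (by simp)
      · rw [show psiY T₁ (true :: false :: u) ky = true :: psiY T₁ (false :: u) (ky+1) by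
            simp [psiY, hk1],
          show psiY T₂ (true :: false :: u) ky = false :: true :: psiY T₂ u (ky+1) by
            simp [psiY, hk2]] at heq
        exact absurd (List.head_eq_of_cons_eq heq) (by simp)
      · rw [show psiY T₁ (true :: false :: u) ky = true :: psiY T₁ (false :: u) (ky+1) by
            simp [psiY, hk1],
          show psiY T₂ (true :: false :: u) ky = true :: psiY T₂ (false :: u) (ky+1) by
            simp [psiY, hk2]] at heq
        exact ih (false :: u) (by simp; omega) T₁ T₂ (ky+1) (tr T₁ hk1 h1) (tr T₂ hk2 h2)
          (List.cons_injective heq)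
lemma B2 (w : Word) (S : Finset ℕ) (kx ky : ℕ)
    (hS : ∀ i ∈ S, kx ≤ i ∧ (i - kx) ∈ Ex w) :
    ∃ T : Finset ℕ, (∀ j ∈ T, ky ≤ j ∧ (j - ky) ∈ Ey (psiX S w kx)) ∧
      psiY T (psiX S w kx) ky = w ∧ T.card = S.card := by
  obtain ⟨T, hmem, heq, hcard⟩ := B1 (w.map not).length (w.map not) le_rfl S kx ky
    (fun i hi => ⟨(hS i hi).1, by rw [← dual_Ex]; exact (hS i hi).2⟩)
  have hq : psiY S (w.map not) kx = (psiX S w kx).map not := by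
    rw [dual_psi', map_not_not]
  refine ⟨T, fun j hj => ?_, ?_, hcard⟩
  · obtain ⟨h1, h2⟩ := hmem j hj
    rw [hq, ← dual_Ey] at h2
    exact ⟨h1, h2⟩
  · rw [hq] at heq
    rw [dual_psi'', heq, map_not_not]

lemma B4 (w : Word) (S₁ S₂ : Finset ℕ) (kx : ℕ)
    (h1 : ∀ i ∈ S₁, kx ≤ i ∧ (i - kx) ∈ Ex w)
    (h2 : ∀ i ∈ S₂, kx ≤ i ∧ (i - kx) ∈ Ex w)
    (heq : psiX S₁ w kx = psiX S₂ w kx) : S₁ = S₂ := by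
  apply B3 (w.map not).length (w.map not) le_rfl S₁ S₂ kx
    (fun i hi => ⟨(h1 i hi).1, by rw [← dual_Ex]; exact (h1 i hi).2⟩)
    (fun i hi => ⟨(h2 i hi).1, by rw [← dual_Ex]; exact (h2 i hi).2⟩)
  have e1 : psiY S₁ (w.map not) kx = (psiX S₁ w kx).map not := by
    rw [dual_psi', map_not_not]
  have e2 : psiY S₂ (w.map not) kx = (psiX S₂ w kx).map not := by
    rw [dual_psi', map_not_not]
  rw [e1, e2, heq]
lemma stepB (w' v : Word) :
    ∑ T ∈ (Ey w').powerset, ((-1:ℤ)^T.card) * (if psiY T w' 0 = v then 1 else 0)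
  = ∑ S ∈ (Ex v).powerset, ((-1:ℤ)^S.card) * (if psiX S v 0 = w' then 1 else 0) := by
  have hypT : ∀ T ∈ (Ey w').powerset, ∀ j ∈ T, 0 ≤ j ∧ (j - 0) ∈ Ey w' := by
    intro T hT j hj
    exact ⟨Nat.zero_le _, by rw [Nat.sub_zero]; exact Finset.mem_powerset.1 hT hj⟩
  have hypS : ∀ S ∈ (Ex v).powerset, ∀ i ∈ S, 0 ≤ i ∧ (i - 0) ∈ Ex v := by
    intro S hS i hi
    exact ⟨Nat.zero_le _, by rw [Nat.sub_zero]; exact Finset.mem_powerset.1 hS hi⟩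
  by_cases hex : ∃ T ∈ (Ey w').powerset, psiY T w' 0 = v
  · obtain ⟨T₀, hT₀, hψ⟩ := hex
    obtain ⟨S₀, hmem, heq, hcard⟩ := B1 w'.length w' le_rfl T₀ 0 0 (hypT T₀ hT₀)
    rw [hψ] at hmem heq
    have hS₀ : S₀ ∈ (Ex v).powerset := Finset.mem_powerset.2 (fun i hi => by
      have := (hmem i hi).2; rwa [Nat.sub_zero] at this)
    rw [Finset.sum_eq_single_of_mem T₀ hT₀ (fun T hT hne => by
      rw [if_neg, mul_zero]
      intro hT'
      exact hne (B3 w'.length w' le_rfl T T₀ 0 (hypT T hT) (hypT T₀ hT₀)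
        (by rw [hT', hψ]))),
      Finset.sum_eq_single_of_mem S₀ hS₀ (fun S hS hne => by
      rw [if_neg, mul_zero]
      intro hS'
      exact hne (B4 v S S₀ 0 (hypS S hS) (hypS S₀ hS₀) (by rw [hS', heq]))),
      if_pos hψ, if_pos heq, hcard]
  · push_neg at hex
    rw [Finset.sum_eq_zero (fun T hT => by rw [if_neg (hex T hT), mul_zero]),
      Finset.sum_eq_zero]
    intro S hS
    rw [if_neg, mul_zero]
    intro hS'
    obtain ⟨T, hmem, heq, -⟩ := B2 v S 0 0 (hypS S hS)
    rw [hS'] at hmem heq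
    exact hex T (Finset.mem_powerset.2 (fun j hj => by
      have := (hmem j hj).2; rwa [Nat.sub_zero] at this)) heq
lemma gxD_true (u : Word) (i : ℕ) (h : i < u.count false) :
    (xIdx (true :: u)).getD i 0 = (xIdx u).getD i 0 + 1 := by
  have hx : xIdx (true :: u) = (xIdx u).map (· + 1) := by rw [xIdx_cons]; simp
  rw [hx, getD_map_add_one _ _ (by rw [length_xIdx]; exact h)]

lemma gxD_false_zero (u : Word) : (xIdx (false :: u)).getD 0 0 = 0 := by
  have hx : xIdx (false :: u) = 0 :: (xIdx u).map (· + 1) := by rw [xIdx_cons]; simp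
  rw [hx]; rfl

lemma gxD_false_succ (u : Word) (i : ℕ) (h : i < u.count false) :
    (xIdx (false :: u)).getD (i+1) 0 = (xIdx u).getD i 0 + 1 := by
  have hx : xIdx (false :: u) = 0 :: (xIdx u).map (· + 1) := by rw [xIdx_cons]; simp
  rw [hx, List.getD_cons_succ, getD_map_add_one _ _ (by rw [length_xIdx]; exact h)]

lemma gx_ge (u : Word) : ∀ i, i < u.count false → i ≤ (xIdx u).getD i 0 := by
  induction u with
  | nil => intro i h; simp at h
  | cons b u ih =>
    intro i h
    cases b
    · match i with
      | 0 => exact Nat.zero_le _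
      | i + 1 =>
        have hi : i < u.count false := by simp [List.count_cons] at h; omega
        rw [gxD_false_succ u i hi]
        have := ih i hi; omega
    · have hi : i < u.count false := by simpa [List.count_cons] using h
      rw [gxD_true u i hi]
      have := ih i hi; omega

lemma gx_psiX : ∀ n (w : Word), w.length ≤ n → ∀ (S : Finset ℕ) k,
    (∀ i ∈ S, k ≤ i → (i - k) ∈ Ex w) → ∀ i, i < w.count false →
    (xIdx (psiX S w k)).getD i 0 = (xIdx w).getD i 0 + (if k + i ∈ S then 1 else 0) := by
  intro n
  induction n with
  | zero =>
    intro w hw S k _ i hi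
    rw [List.length_eq_zero_iff.1 (Nat.le_zero.1 hw)] at hi; simp at hi
  | succ n ih =>
    intro w hw S k hS i hi
    match w with
    | [] => simp at hi
    | true :: u =>
      simp only [List.length_cons] at hw
      have hcu : i < u.count false := by simpa [List.count_cons] using hi
      rw [show psiX S (true :: u) k = true :: psiX S u k by simp [psiX],
        gxD_true _ _ (by rw [psiX_count']; exact hcu),
        gxD_true _ _ hcu,
        ih u (by omega) S k (fun j hj hk => (mem_Ex_true_cons u _).1 (hS j hj hk)) i hcu]
      omega
    | false :: true :: u =>
      simp only [List.length_cons] at hw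
      by_cases hk : k ∈ S
      · rw [show psiX S (false :: true :: u) k = true :: false :: psiX S u (k+1) by
          simp [psiX, hk]]
        match i with
        | 0 =>
          rw [gxD_true _ _ (by simp [List.count_cons, psiX_count']),
            gxD_false_zero, gxD_false_zero]
          simp [hk]
        | i + 1 =>
          have hcu : i < u.count false := by simp [List.count_cons] at hi; omega
          have htr : ∀ j ∈ S, k + 1 ≤ j → (j - (k+1)) ∈ Ex u := by
            intro j hj hjk
            have h2 := hS j hj (by omega)
            have : j - k = (j - (k+1)) + 1 := by omega
            rw [this, mem_Ex_false_cons_succ, mem_Ex_true_cons] at h2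
            exact h2
          rw [gxD_true _ _ (by simp [List.count_cons, psiX_count']; omega),
            gxD_false_succ _ _ (by rw [psiX_count']; exact hcu),
            ih u (by omega) S (k+1) htr i hcu,
            gxD_false_succ _ _ (by simp [List.count_cons]; omega),
            gxD_true _ _ hcu,
            show k + (i+1) = k + 1 + i by omega]
          omega
      · rw [show psiX S (false :: true :: u) k = false :: psiX S (true :: u) (k+1) by
          simp [psiX, hk]]
        match i with
        | 0 => rw [gxD_false_zero, gxD_false_zero]; simp [hk]
        | i + 1 =>
          have hcu : i < u.count false := by simp [List.count_cons] at hi; omega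
          have htr : ∀ j ∈ S, k + 1 ≤ j → (j - (k+1)) ∈ Ex (true :: u) := by
            intro j hj hjk
            have h2 := hS j hj (by omega)
            have : j - k = (j - (k+1)) + 1 := by omega
            rw [this, mem_Ex_false_cons_succ] at h2
            exact h2
          have hcu' : i < (true :: u : Word).count false := by
            simpa [List.count_cons] using hcu
          rw [gxD_false_succ _ _ (by rw [psiX_count']; exact hcu'),
            ih (true :: u) (by simp; omega) S (k+1) htr i hcu',
            gxD_false_succ _ _ hcu',
            show k + (i+1) = k + 1 + i by omega]
          omega
    | [false] =>
      have hkS : k ∉ S := by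
        intro hk
        have := hS k hk le_rfl
        rw [Nat.sub_self, mem_Ex_false_cons_zero] at this
        simp at this
      have hi0 : i = 0 := by simp [List.count_cons] at hi; omega
      subst hi0
      rw [show psiX S [false] k = false :: psiX S [] (k+1) by simp [psiX],
        gxD_false_zero, gxD_false_zero]
      simp [hkS]
    | false :: false :: u =>
      simp only [List.length_cons] at hw
      have hkS : k ∉ S := by
        intro hk
        have := hS k hk le_rfl
        rw [Nat.sub_self, mem_Ex_false_cons_zero] at this
        simp at this
      rw [show psiX S (false :: false :: u) k = false :: psiX S (false :: u) (k+1) by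
        simp [psiX]]
      match i with
      | 0 => rw [gxD_false_zero, gxD_false_zero]; simp [hkS]
      | i + 1 =>
        have hcu : i < (false :: u : Word).count false := by
          simp [List.count_cons] at hi ⊢; omega
        have htr : ∀ j ∈ S, k + 1 ≤ j → (j - (k+1)) ∈ Ex (false :: u) := by
          intro j hj hjk
          have h2 := hS j hj (by omega)
          have : j - k = (j - (k+1)) + 1 := by omega
          rw [this, mem_Ex_false_cons_succ] at h2
          exact h2
        rw [gxD_false_succ _ _ (by rw [psiX_count']; exact hcu),
          ih (false :: u) (by simp; omega) S (k+1) htr i hcu,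
          gxD_false_succ _ _ hcu,
          show k + (i+1) = k + 1 + i by omega]
        omega
lemma mem_wordsOfLen (u : Word) (n : ℕ) : u ∈ wordsOfLen n ↔ u.length = n := by
  constructor
  · rintro hu
    rw [wordsOfLen, Finset.mem_image] at hu
    obtain ⟨f, -, rfl⟩ := hu
    simp
  · intro h
    subst h
    rw [wordsOfLen, Finset.mem_image]
    exact ⟨u.get, Finset.mem_univ _, List.ofFn_get u⟩

lemma Ex_subset_range (v : Word) : Ex v ⊆ Finset.range (v.count false) :=
  Finset.filter_subset _ _

lemma stepC (w v : Word) :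
    (HW w) v = ∑ S ∈ (Ex v).powerset, ((-1:ℤ)^S.card) *
      (if wle w (psiX S v 0) then 1 else 0) := by
  have hA : (HW w) v = ∑ w' ∈ (wordsOfLen w.length).filter (fun u => wle w u),
      ∑ T ∈ (Ey w').powerset, ((-1:ℤ)^T.card) * (if psiY T w' 0 = v then 1 else 0) := by
    rw [HW, Finset.sum_apply']
    refine Finset.sum_congr rfl (fun w' _ => ?_)
    rw [Finset.sum_apply']
    refine Finset.sum_congr rfl (fun T _ => ?_)
    rw [Finsupp.smul_apply, δ, Finsupp.single_apply]
    simp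
  rw [hA]
  have hB : ∀ w' ∈ (wordsOfLen w.length).filter (fun u => wle w u),
      ∑ T ∈ (Ey w').powerset, ((-1:ℤ)^T.card) * (if psiY T w' 0 = v then 1 else 0)
      = ∑ S ∈ (Ex v).powerset, ((-1:ℤ)^S.card) * (if psiX S v 0 = w' then 1 else 0) :=
    fun w' _ => stepB w' v
  rw [Finset.sum_congr rfl hB, Finset.sum_comm]
  refine Finset.sum_congr rfl (fun S hS => ?_)
  rw [← Finset.mul_sum, Finset.sum_ite_eq]
  congr 1
  by_cases hwle : wle w (psiX S v 0)
  · rw [if_pos, if_pos hwle]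
    rw [Finset.mem_filter]
    refine ⟨?_, hwle⟩
    rw [mem_wordsOfLen, ← count_false_add_count_true, ← count_false_add_count_true w,
      ← hwle.1, ← hwle.2.1]
  · rw [if_neg (fun hmem => hwle (Finset.mem_filter.1 hmem).2), if_neg hwle]
noncomputable def fE (w v : Word) (i : ℕ) : ℤ :=
  if i ∈ Ex v then -(if (xIdx w).getD i 0 ≤ (xIdx v).getD i 0 + 1 then 1 else 0) else 0

noncomputable def gE (w v : Word) (i : ℕ) : ℤ :=
  if (xIdx w).getD i 0 ≤ (xIdx v).getD i 0 then 1 else 0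

lemma factor_mem (w v : Word) (i : ℕ) (hiE : i ∈ Ex v)
    (hb1 : i ≤ (xIdx w).getD i 0) (hb2 : i ≤ (xIdx v).getD i 0)
    (h : fX v i + 1 = fX w i) : fE w v i + gE w v i = -1 := by
  unfold fX at h
  have hcd : (xIdx w).getD i 0 = (xIdx v).getD i 0 + 1 := by omega
  unfold fE gE
  rw [if_pos hiE, if_pos (by omega), if_neg (by omega)]
  ring

lemma factor_nmem (w v : Word) (i : ℕ) (hiE : i ∉ Ex v)
    (hb1 : i ≤ (xIdx w).getD i 0) (hb2 : i ≤ (xIdx v).getD i 0)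
    (h : fX w i ≤ fX v i) : fE w v i + gE w v i = 1 := by
  unfold fX at h
  unfold fE gE
  rw [if_neg hiE, if_pos (by omega)]
  ring

lemma factor_zero_mem (w v : Word) (i : ℕ) (hiE : i ∈ Ex v)
    (hb1 : i ≤ (xIdx w).getD i 0) (hb2 : i ≤ (xIdx v).getD i 0)
    (h : fX v i + 1 ≠ fX w i) : fE w v i + gE w v i = 0 := by
  unfold fX at h
  have hne : (xIdx w).getD i 0 ≠ (xIdx v).getD i 0 + 1 := by omega
  unfold fE gE
  rw [if_pos hiE]
  by_cases hle : (xIdx w).getD i 0 ≤ (xIdx v).getD i 0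
  · rw [if_pos (by omega), if_pos hle]; ring
  · rw [if_neg (by omega), if_neg hle]; ring

lemma factor_zero_nmem (w v : Word) (i : ℕ) (hiE : i ∉ Ex v)
    (hb1 : i ≤ (xIdx w).getD i 0) (hb2 : i ≤ (xIdx v).getD i 0)
    (h : ¬ (fX w i ≤ fX v i)) : fE w v i + gE w v i = 0 := by
  unfold fX at h
  unfold fE gE
  rw [if_neg hiE, if_neg (by omega)]
  ring


/-- The words `v` occurring in `H w` are exactly those with the same
letter counts such that (i) `f^x_v(i) = f^x_w(i) − 1` for each `i ∈ E^x_v`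
(the x's of `v` immediately followed by a y) and (ii) `f^x_v(i) ≥ f^x_w(i)` for all
other `i`; and such a `v` has coefficient `(−1)^{|E^x_v|}`. -/
theorem stmt19 (w v : Word) :
    (HW w) v =
      if v.count false = w.count false ∧ v.count true = w.count true ∧
         (∀ i ∈ Ex v, fX v i + 1 = fX w i) ∧
         (∀ i < v.count false, i ∉ Ex v → fX w i ≤ fX v i)
      then (-1 : ℤ)^(Ex v).card else 0 := by
  rw [stepC]
  by_cases hc : v.count false = w.count false ∧ v.count true = w.count true
  swap
  · rw [if_neg (fun h => hc ⟨h.1, h.2.1⟩), Finset.sum_eq_zero]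
    intro S hS
    rw [if_neg, mul_zero]
    intro hwle
    exact hc ⟨by rw [← psiX_count' S false v 0, ← hwle.1],
      by rw [← psiX_count' S true v 0, ← hwle.2.1]⟩
  obtain ⟨hcf, hct⟩ := hc
  have hEsub : Ex v ⊆ Finset.range (v.count false) := Ex_subset_range v
  have hper : ∀ S ∈ (Ex v).powerset,
      ((-1:ℤ)^S.card) * (if wle w (psiX S v 0) then 1 else 0)
      = (∏ i ∈ S, fE w v i) * ∏ i ∈ Finset.range (v.count false) \ S, gE w v i := by
    intro S hS
    rw [Finset.mem_powerset] at hS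
    have hSsub : S ⊆ Finset.range (v.count false) := hS.trans hEsub
    have hgx : ∀ i, i < v.count false →
        (xIdx (psiX S v 0)).getD i 0 = (xIdx v).getD i 0 + (if i ∈ S then 1 else 0) := by
      intro i hi
      have := gx_psiX v.length v le_rfl S 0
        (fun j hj _ => by rw [Nat.sub_zero]; exact hS hj) i hi
      rwa [zero_add] at this
    have hwle_iff : wle w (psiX S v 0) ↔
        ∀ i ∈ Finset.range (v.count false),
          (xIdx w).getD i 0 ≤ (xIdx v).getD i 0 + (if i ∈ S then 1 else 0) := by
      constructor
      · rintro ⟨-, -, h3⟩ i hi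
        rw [Finset.mem_range] at hi
        have h4 := h3 i (by omega)
        rwa [hgx i hi] at h4
      · intro h
        refine ⟨by rw [psiX_count']; exact hcf.symm,
          by rw [psiX_count']; exact hct.symm, fun i hi => ?_⟩
        rw [hgx i (by omega)]
        exact h i (Finset.mem_range.2 (by omega))
    have hb : (if wle w (psiX S v 0) then (1:ℤ) else 0)
        = ∏ i ∈ Finset.range (v.count false),
          (if (xIdx w).getD i 0 ≤ (xIdx v).getD i 0 + (if i ∈ S then 1 else 0)
           then (1:ℤ) else 0) := by
      rw [Finset.prod_boole]
      by_cases hh : wle w (psiX S v 0)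
      · rw [if_pos hh, if_pos (hwle_iff.1 hh)]
      · rw [if_neg hh, if_neg (fun hy => hh (hwle_iff.2 hy))]
    rw [hb, ← Finset.prod_sdiff hSsub]
    have e1 : ∏ i ∈ Finset.range (v.count false) \ S,
        (if (xIdx w).getD i 0 ≤ (xIdx v).getD i 0 + (if i ∈ S then 1 else 0)
         then (1:ℤ) else 0)
        = ∏ i ∈ Finset.range (v.count false) \ S, gE w v i := by
      refine Finset.prod_congr rfl (fun i hi => ?_)
      rw [if_neg (Finset.mem_sdiff.1 hi).2, add_zero]; rfl
    have e2 : ∏ i ∈ S,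
        (if (xIdx w).getD i 0 ≤ (xIdx v).getD i 0 + (if i ∈ S then 1 else 0)
         then (1:ℤ) else 0)
        = ∏ i ∈ S, (if (xIdx w).getD i 0 ≤ (xIdx v).getD i 0 + 1 then (1:ℤ) else 0) := by
      refine Finset.prod_congr rfl (fun i hi => ?_)
      rw [if_pos hi]
    rw [e1, e2]
    have e3 : ((-1:ℤ))^S.card
        * ∏ i ∈ S, (if (xIdx w).getD i 0 ≤ (xIdx v).getD i 0 + 1 then (1:ℤ) else 0)
        = ∏ i ∈ S, fE w v i := by
      rw [← Finset.prod_const (-1:ℤ), ← Finset.prod_mul_distrib]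
      refine Finset.prod_congr rfl (fun i hi => ?_)
      unfold fE
      rw [if_pos (hS hi)]
      ring
    rw [← mul_assoc, mul_right_comm, e3, mul_comm]
  rw [Finset.sum_congr rfl hper,
    Finset.sum_subset (Finset.powerset_mono.2 hEsub) (fun x hx hnx => by
      obtain ⟨i, hix, hiE⟩ :=
        Finset.not_subset.1 (fun hsub => hnx (Finset.mem_powerset.2 hsub))
      rw [Finset.prod_eq_zero hix (by unfold fE; exact if_neg hiE), zero_mul]),
    ← Finset.prod_add]
  have hblt : ∀ i, i < v.count false →
      i ≤ (xIdx w).getD i 0 ∧ i ≤ (xIdx v).getD i 0 := fun i hi =>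
    ⟨gx_ge w i (by omega), gx_ge v i hi⟩
  by_cases hAB : (∀ i ∈ Ex v, fX v i + 1 = fX w i) ∧
      (∀ i < v.count false, i ∉ Ex v → fX w i ≤ fX v i)
  · rw [if_pos ⟨hcf, hct, hAB.1, hAB.2⟩, ← Finset.prod_sdiff hEsub]
    have p1 : ∏ i ∈ Finset.range (v.count false) \ Ex v, (fE w v i + gE w v i) = 1 := by
      refine Finset.prod_eq_one (fun i hi => ?_)
      obtain ⟨hir, hiE⟩ := Finset.mem_sdiff.1 hi
      rw [Finset.mem_range] at hir
      obtain ⟨hb1, hb2⟩ := hblt i hir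
      exact factor_nmem w v i hiE hb1 hb2 (hAB.2 i hir hiE)
    have p2 : ∏ i ∈ Ex v, (fE w v i + gE w v i) = (-1:ℤ)^(Ex v).card := by
      rw [← Finset.prod_const (-1:ℤ)]
      refine Finset.prod_congr rfl (fun i hi => ?_)
      have hir := Finset.mem_range.1 (hEsub hi)
      obtain ⟨hb1, hb2⟩ := hblt i hir
      exact factor_mem w v i hi hb1 hb2 (hAB.1 i hi)
    rw [p1, p2, one_mul]
  · rw [if_neg (fun h => hAB ⟨h.2.2.1, h.2.2.2⟩)]
    rcases not_and_or.1 hAB with hA | hB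
    · push_neg at hA
      obtain ⟨i, hiE, hne⟩ := hA
      have hir := Finset.mem_range.1 (hEsub hiE)
      obtain ⟨hb1, hb2⟩ := hblt i hir
      exact Finset.prod_eq_zero (hEsub hiE) (factor_zero_mem w v i hiE hb1 hb2 hne)
    · push_neg at hB
      obtain ⟨i, hir, hiE, hne⟩ := hB
      obtain ⟨hb1, hb2⟩ := hblt i hir
      exact Finset.prod_eq_zero (Finset.mem_range.2 hir)
        (factor_zero_nmem w v i hiE hb1 hb2 (by omega))
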